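/- Let F ⊆ G be lattice filters of an MV-algebra L. Then F ⊸ G = ((F ⊸ G) ⊸ G) ⊸ G. -/
import Mathlib


/-- An MV-algebra: a commutative monoid `(L, ⊕, 0)` with a unary `¬` satisfying
`¬¬x = x`, `x ⊕ ¬0 = ¬0` and `¬(¬x ⊕ y) ⊕ y = ¬(¬y ⊕ x) ⊕ x`. -/
class MV (L : Type*) where
  add : L → L → L
  zero : L
  neg : L → L
  add_assoc : ∀ x y z : L, add (add x y) z = add x (add y z)
  add_comm : ∀ x y : L, add x y = add y x
  add_zero : ∀ x : L, add x zero = x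
  neg_neg : ∀ x : L, neg (neg x) = x
  add_neg_zero : ∀ x : L, add x (neg zero) = neg zero
  luk : ∀ x y : L, add (neg (add (neg x) y)) y = add (neg (add (neg y) x)) x

namespace MV

variable {L : Type*} [MV L]

/-- `1 = ¬0`. -/
def one : L := neg zero

/-- `x → y = ¬x ⊕ y`. -/
def imp (x y : L) : L := add (neg x) y

/-- `x ⊗ y = ¬(¬x ⊕ ¬y)`. -/
def otimes (x y : L) : L := neg (add (neg x) (neg y))

/-- `x ∨ y = (x → y) → y`. -/
def join (x y : L) : L := imp (imp x y) y

/-- `x ∧ y = ¬(¬x ∨ ¬y)`. -/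
def meet (x y : L) : L := neg (join (neg x) (neg y))

/-- `x ≤ y` iff `x → y = 1`. -/
def le (x y : L) : Prop := imp x y = one

/-- `x < y` iff `x ≤ y` and `x ≠ y`. -/
def lt (x y : L) : Prop := le x y ∧ x ≠ y

/-- A lattice filter: nonempty, upward closed, closed under `∧`. -/
def IsLatticeFilter (F : Set L) : Prop :=
  F.Nonempty ∧ (∀ x y : L, x ∈ F → le x y → y ∈ F) ∧
    (∀ x y : L, x ∈ F → y ∈ F → meet x y ∈ F)

/-- A prime lattice filter: a proper lattice filter such that
`x ∨ y ∈ F` implies `x ∈ F` or `y ∈ F`. -/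
def IsPrimeFilter (F : Set L) : Prop :=
  IsLatticeFilter F ∧ F ≠ Set.univ ∧ ∀ x y : L, join x y ∈ F → x ∈ F ∨ y ∈ F

/-- `F ⊸ G = {z | ∀ a ∉ G, z → a ∉ F}` (intended for `F ⊆ G`). -/
def lolli (F G : Set L) : Set L := {z | ∀ a ∉ G, imp z a ∉ F}

/-- The general `F ⊸ G = (F ∩ G) ⊸ G`. -/
def lolli' (F G : Set L) : Set L := lolli (F ∩ G) G

/-- The kernel `K(F) = {z | ∀ a ∉ F, z → a ∉ F}`. -/
def ker (F : Set L) : Set L := {z | ∀ a ∉ F, imp z a ∉ F}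

/-- `F⁺ = {z | ¬z ∉ F}`. -/
def plus (F : Set L) : Set L := {z | neg z ∉ F}

/-- An implication filter: contains `1` and is closed under modus ponens. -/
def IsImplicationFilter (P : Set L) : Prop :=
  (one : L) ∈ P ∧ ∀ x y : L, x ∈ P → imp x y ∈ P → y ∈ P

/-- `x ~_P y` iff `x → y ∈ P` and `y → x ∈ P`. -/
def simP (P : Set L) (x y : L) : Prop := imp x y ∈ P ∧ imp y x ∈ P

/-- `J_u(F, P) = {z | ∃ f ∈ F, z ~_P f}`. -/
def Ju (F P : Set L) : Set L := {z | ∃ f ∈ F, simP P z f}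

/-- `J_d(F, P) = (J_u(F⁺, P))⁺`. -/
def Jd (F P : Set L) : Set L := plus (Ju (plus F) P)

end MV

open MV

section Aux

variable {L : Type*} [MV L]

lemma mv_add_one (x : L) : MV.add x (one : L) = one := MV.add_neg_zero x

lemma mv_one_add (x : L) : MV.add (one : L) x = one := by
  rw [MV.add_comm]; exact mv_add_one x

lemma mv_add_left_comm (p q r : L) :
    MV.add p (MV.add q r) = MV.add q (MV.add p r) := by
  rw [← MV.add_assoc, MV.add_comm p q, MV.add_assoc]

lemma mv_neg_add_self (x : L) : MV.add (MV.neg x) x = one := by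
  have h := MV.luk (one : L) x
  have h1 : MV.neg (one : L) = (MV.zero : L) := by
    show MV.neg (MV.neg MV.zero) = MV.zero
    exact MV.neg_neg _
  rw [h1] at h
  have h2 : MV.add (MV.zero : L) x = x := by rw [MV.add_comm]; exact MV.add_zero x
  rw [h2] at h
  rw [mv_add_one] at h
  exact h

lemma mv_add_neg_self (x : L) : MV.add x (MV.neg x) = one := by
  rw [MV.add_comm]; exact mv_neg_add_self x

/-- `z ≤ z ∨ a`. -/
lemma mv_le_join (z a : L) : le z (join z a) := by
  show MV.add (MV.neg z) (MV.add (MV.neg (MV.add (MV.neg z) a)) a) = one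
  rw [MV.add_comm (MV.neg (MV.add (MV.neg z) a)) a, ← MV.add_assoc]
  exact mv_add_neg_self _

/-- If `z ≤ w` then `w → a ≤ z → a`. -/
lemma mv_imp_antitone {z w : L} (h : le z w) (a : L) :
    le (imp w a) (imp z a) := by
  show MV.add (MV.neg (MV.add (MV.neg w) a)) (MV.add (MV.neg z) a) = one
  have key := MV.luk w a
  calc MV.add (MV.neg (MV.add (MV.neg w) a)) (MV.add (MV.neg z) a)
      = MV.add (MV.neg z) (MV.add (MV.neg (MV.add (MV.neg w) a)) a) := by
        rw [mv_add_left_comm]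
    _ = MV.add (MV.neg z) (MV.add (MV.neg (MV.add (MV.neg a) w)) w) := by rw [key]
    _ = MV.add (MV.add (MV.neg z) w) (MV.neg (MV.add (MV.neg a) w)) := by
        rw [MV.add_comm (MV.neg (MV.add (MV.neg a) w)) w, ← MV.add_assoc]
    _ = one := by
        have : MV.add (MV.neg z) w = (one : L) := h
        rw [this]; exact mv_one_add _

/-- `lolli F G` is upward closed when `F` is. -/
lemma lolli_upward {F G : Set L}
    (hF : ∀ x y : L, x ∈ F → le x y → y ∈ F) {z w : L}
    (hz : z ∈ lolli F G) (hzw : le z w) : w ∈ lolli F G := by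
  intro a ha hwa
  exact hz a ha (hF _ _ hwa (mv_imp_antitone hzw a))

/-- `lolli` is antitone in the first argument. -/
lemma lolli_antitone {F F' G : Set L} (h : F ⊆ F') :
    lolli F' G ⊆ lolli F G := fun z hz a ha hfa => hz a ha (h hfa)

/-- Any upward closed set is contained in its double dual. -/
lemma subset_lolli_lolli {X G : Set L}
    (hX : ∀ x y : L, x ∈ X → le x y → y ∈ X) :
    X ⊆ lolli (lolli X G) G := by
  intro z hz a ha hza
  exact hza a ha (hX _ _ hz (mv_le_join z a))

end Aux

/-- For lattice filters `F ⊆ G`,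
`F ⊸ G = ((F ⊸ G) ⊸ G) ⊸ G`. -/
theorem stmt_17 {L : Type*} [MV L] (F G : Set L)
    (hF : IsLatticeFilter F) (hG : IsLatticeFilter G) (hFG : F ⊆ G) :
    lolli F G = lolli (lolli (lolli F G) G) G := by
  apply Set.Subset.antisymm
  · exact subset_lolli_lolli (fun x y hx hxy => lolli_upward hF.2.1 hx hxy)
  · exact lolli_antitone (subset_lolli_lolli hF.2.1)
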